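/- Let n ≥ 1 be an integer and let σ > (n+1)/2 be a real number. Then there exists a constant C > 0, depending only on n and σ, such that for all β ∈ (1/2, 1) and all b ∈ (0,1): ∫_{{x ∈ ℝⁿ : ‖x‖ < b}} (b + β·x₁)^{-σ} dx ≤ C · b^{n-σ} · (1-β²)^{(n+1-2σ)/2}. -/

import Mathlib

open MeasureTheory Set
open scoped ENNReal

lemma aux_lintegral_pi_prod {n : ℕ} (f : Fin n → ℝ → ℝ≥0∞) (hf : ∀ i, Measurable (f i)) :
    ∫⁻ x : Fin n → ℝ, ∏ i, f i (x i) = ∏ i, ∫⁻ t, f i t := by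
  induction n with
  | zero => simp [volume_pi]
  | succ n ih =>
    have hmp := (measurePreserving_piFinSuccAbove (fun _ : Fin (n+1) => (volume : Measure ℝ)) 0).symm
    rw [volume_pi, ← hmp.lintegral_comp_emb (MeasurableEquiv.measurableEmbedding _)]
    simp_rw [MeasurableEquiv.piFinSuccAbove_symm_apply, Fin.insertNthEquiv,
      Fin.prod_univ_succ, Fin.insertNth_zero]
    simp only [Fin.zero_succAbove, cast_eq, Function.comp_def, Fin.cons_zero, Fin.cons_succ,
      Equiv.coe_fn_mk]
    have key := lintegral_prod_mul (μ := (volume : Measure ℝ))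
      (ν := Measure.pi fun _ : Fin n => (volume : Measure ℝ))
      (f := f 0) (g := fun y : Fin n → ℝ => ∏ x : Fin n, f x.succ (y x))
      (hf 0).aemeasurable
      (Finset.measurable_prod Finset.univ fun i _ =>
        (hf i.succ).comp (measurable_pi_apply i)).aemeasurable
    rw [key, ← volume_pi, ih (fun i => f i.succ) (fun i => hf i.succ)]

lemma aux_lintegral_Ioi_rpow {p c : ℝ} (hp : p < -1) (hc : 0 < c) :
    ∫⁻ t in Ioi c, ENNReal.ofReal (t ^ p) = ENNReal.ofReal (c ^ (p + 1) / (-(p + 1))) := by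
  rw [← ofReal_integral_eq_lintegral_ofReal (integrableOn_Ioi_rpow_of_lt hp hc) ?_]
  · rw [integral_Ioi_rpow_of_lt hp hc]
    rw [div_neg, neg_div]
  · filter_upwards [ae_restrict_mem measurableSet_Ioi] with t ht
    exact Real.rpow_nonneg (le_of_lt (hc.trans ht)) p

lemma aux_lintegral_shift (f : ℝ → ℝ≥0∞) (c d : ℝ) :
    ∫⁻ t in Ioi c, f (t + d) = ∫⁻ t in Ioi (c + d), f t := by
  have h := (measurePreserving_add_right (volume : Measure ℝ) d).setLIntegral_comp_preimage_emb
    (MeasurableEquiv.addRight d).measurableEmbedding f (Ioi (c + d))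
  have hpre : (fun t : ℝ => t + d) ⁻¹' Ioi (c + d) = Ioi c := by
    ext t; simp [Set.mem_Ioi]
  simpa [hpre] using h

lemma aux_lintegral_reflect (f : ℝ → ℝ≥0∞) (c : ℝ) :
    ∫⁻ t in Iio c, f t = ∫⁻ t in Ioi (-c), f (-t) := by
  have h := (Measure.measurePreserving_neg (volume : Measure ℝ)).setLIntegral_comp_preimage_emb
    (MeasurableEquiv.neg ℝ).measurableEmbedding f (Iio c)
  have hpre : (Neg.neg : ℝ → ℝ) ⁻¹' Iio c = Ioi (-c) := by
    ext t; simp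
  rw [← h, hpre]

lemma aux_I0 {b A σ₁ : ℝ} (hb : 0 < b) (hA : 0 < A) (hσ₁ : 1 < σ₁) :
    ∫⁻ t, (Ioo (-b) b).indicator
      (fun t => if b + t ≤ 2 * A then ENNReal.ofReal (A ^ (-σ₁))
        else ENNReal.ofReal (((b + t) / 2) ^ (-σ₁))) t
      ≤ ENNReal.ofReal ((2 + 2 / (σ₁ - 1)) * A ^ (1 - σ₁)) := by
  have hle : ∀ t : ℝ, (Ioo (-b) b).indicator
      (fun t => if b + t ≤ 2 * A then ENNReal.ofReal (A ^ (-σ₁))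
        else ENNReal.ofReal (((b + t) / 2) ^ (-σ₁))) t
      ≤ (Ioc (-b) (-b + 2 * A)).indicator (fun _ => ENNReal.ofReal (A ^ (-σ₁))) t
        + (Ioi (-b + 2 * A)).indicator (fun t => ENNReal.ofReal (((b + t) / 2) ^ (-σ₁))) t := by
    intro t
    by_cases ht : t ∈ Ioo (-b) b
    · rw [indicator_of_mem ht]
      by_cases h2 : b + t ≤ 2 * A
      · rw [if_pos h2]
        have hm : t ∈ Ioc (-b) (-b + 2 * A) := ⟨ht.1, by linarith⟩
        rw [indicator_of_mem hm]
        exact le_self_add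
      · rw [if_neg h2]
        have hm : t ∈ Ioi (-b + 2 * A) := by simp only [mem_Ioi]; linarith
        rw [indicator_of_mem hm]
        exact le_add_self
    · rw [indicator_of_notMem ht]; exact zero_le
  have step1 := lintegral_mono (μ := (volume : Measure ℝ)) hle
  have hmeas : Measurable ((Ioc (-b) (-b + 2 * A)).indicator
      (fun _ : ℝ => ENNReal.ofReal (A ^ (-σ₁)))) :=
    measurable_const.indicator measurableSet_Ioc
  rw [lintegral_add_left hmeas, lintegral_indicator measurableSet_Ioc _,
    lintegral_indicator measurableSet_Ioi _, setLIntegral_const] at step1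
  -- compute second piece
  have h2 : (∫⁻ t in Ioi (-b + 2 * A), ENNReal.ofReal (((b + t) / 2) ^ (-σ₁)))
      = ENNReal.ofReal (2 ^ σ₁) * ENNReal.ofReal ((2 * A) ^ (-σ₁ + 1) / (-(-σ₁ + 1))) := by
    have hshift := aux_lintegral_shift (fun u => ENNReal.ofReal ((u / 2) ^ (-σ₁))) (-b + 2 * A) b
    simp only [add_comm b] at *
    rw [hshift, show -b + 2 * A + b = 2 * A by ring]
    have hcong : ∀ u ∈ Ioi (2 * A), ENNReal.ofReal ((u / 2) ^ (-σ₁))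
        = ENNReal.ofReal (2 ^ σ₁) * ENNReal.ofReal (u ^ (-σ₁)) := by
      intro u hu
      have hu' : (0:ℝ) < u := lt_trans (by positivity) hu
      rw [← ENNReal.ofReal_mul (by positivity)]
      congr 1
      rw [Real.div_rpow hu'.le (by norm_num), Real.rpow_neg (by norm_num : (0:ℝ) ≤ 2)]
      field_simp
    rw [setLIntegral_congr_fun measurableSet_Ioi hcong,
      lintegral_const_mul _ (by measurability),
      aux_lintegral_Ioi_rpow (by linarith) (by positivity)]
  rw [h2, Real.volume_Ioc, show -b + 2 * A - -b = 2 * A by ring] at step1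
  refine le_trans step1 ?_
  rw [← ENNReal.ofReal_mul (by positivity), ← ENNReal.ofReal_mul (by positivity),
    ← ENNReal.ofReal_add (by positivity)
      (mul_nonneg (Real.rpow_nonneg (by norm_num) _)
        (div_nonneg (Real.rpow_nonneg (by positivity) _) (by linarith)))]
  apply ENNReal.ofReal_le_ofReal
  have e1 : A ^ (-σ₁) * (2 * A) = 2 * A ^ (1 - σ₁) := by
    rw [show (1 - σ₁) = -σ₁ + 1 by ring, Real.rpow_add hA, Real.rpow_one]; ring
  have e2 : (2 * A) ^ (-σ₁ + 1) = 2 ^ (-σ₁ + 1) * A ^ (-σ₁ + 1) :=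
    Real.mul_rpow (by norm_num) hA.le
  have e3 : (2:ℝ) ^ σ₁ * 2 ^ (-σ₁ + 1) = 2 := by
    rw [← Real.rpow_add (by norm_num : (0:ℝ) < 2)]
    norm_num
  have hσne : σ₁ - 1 ≠ 0 := by linarith
  rw [e1, e2, show -σ₁ + 1 = 1 - σ₁ by ring]
  rw [show (2:ℝ) ^ σ₁ * (2 ^ (1 - σ₁) * A ^ (1 - σ₁) / -(1 - σ₁))
      = ((2:ℝ) ^ σ₁ * 2 ^ (1 - σ₁)) * (A ^ (1 - σ₁) / (σ₁ - 1)) by rw [neg_sub]; ring]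
  rw [show (2:ℝ) ^ σ₁ * 2 ^ (1 - σ₁) = 2 from by rw [show (1 - σ₁) = -σ₁ + 1 by ring]; exact e3]
  field_simp
  ring_nf
  exact le_refl _

lemma aux_I1 {b A s : ℝ} (hb : 0 < b) (hA : 0 < A) (hs : 1/2 < s) :
    ∫⁻ t : ℝ, (if |t| ≤ 2 * (b * A) ^ ((1:ℝ)/2) then ENNReal.ofReal (A ^ (-s))
      else ENNReal.ofReal ((4 * b) ^ s * |t| ^ (-(2 * s))))
      ≤ ENNReal.ofReal ((4 + 4 / (2 * s - 1)) * (b * A) ^ ((1:ℝ)/2) * A ^ (-s)) := by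
  set T : ℝ := 2 * (b * A) ^ ((1:ℝ)/2) with hTdef
  have hT : 0 < T := by positivity
  set g : ℝ → ℝ≥0∞ := fun t => ENNReal.ofReal ((4 * b) ^ s * |t| ^ (-(2 * s))) with hg
  have hgmeas : Measurable g := by
    refine ENNReal.measurable_ofReal.comp ?_
    exact ((continuous_abs.measurable.pow measurable_const).const_mul _)
  have hle : ∀ t : ℝ, (if |t| ≤ T then ENNReal.ofReal (A ^ (-s)) else g t)
      ≤ (Icc (-T) T).indicator (fun _ => ENNReal.ofReal (A ^ (-s))) t
        + (Ioi T).indicator g t + (Iio (-T)).indicator g t := by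
    intro t
    by_cases habs : |t| ≤ T
    · rw [if_pos habs, indicator_of_mem (mem_Icc.mpr (abs_le.mp habs))]
      exact le_add_right le_self_add
    · rw [if_neg habs]
      push_neg at habs
      rcases lt_abs.mp habs with h | h
      · rw [indicator_of_mem (mem_Ioi.mpr h)]
        exact le_add_right le_add_self
      · have hm : t ∈ Iio (-T) := by simp only [mem_Iio]; linarith
        rw [indicator_of_mem hm]
        exact le_add_self
  have step1 := lintegral_mono (μ := (volume : Measure ℝ)) hle
  have hm2 : Measurable fun t => (Icc (-T) T).indicator (fun _ => ENNReal.ofReal (A ^ (-s))) t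
      + (Ioi T).indicator g t :=
    (measurable_const.indicator measurableSet_Icc).add (hgmeas.indicator measurableSet_Ioi)
  rw [lintegral_add_left hm2,
    lintegral_add_left (measurable_const.indicator measurableSet_Icc),
    lintegral_indicator measurableSet_Icc _, lintegral_indicator measurableSet_Ioi _,
    lintegral_indicator measurableSet_Iio _, setLIntegral_const] at step1
  -- tail over Ioi T
  have htail : ∫⁻ t in Ioi T, g t
      = ENNReal.ofReal ((4 * b) ^ s) * ENNReal.ofReal (T ^ (-(2 * s) + 1) / (-(-(2 * s) + 1))) := by
    have hcong : ∀ t ∈ Ioi T, g t = ENNReal.ofReal ((4 * b) ^ s) * ENNReal.ofReal (t ^ (-(2 * s))) := by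
      intro t ht
      have ht' : (0:ℝ) < t := hT.trans ht
      have hgt : g t = ENNReal.ofReal ((4 * b) ^ s * |t| ^ (-(2 * s))) := rfl
      rw [hgt, abs_of_pos ht', ENNReal.ofReal_mul (by positivity)]
    rw [setLIntegral_congr_fun measurableSet_Ioi hcong,
      lintegral_const_mul _
        (show Measurable fun t : ℝ => ENNReal.ofReal (t ^ (-(2 * s))) from
          ENNReal.measurable_ofReal.comp (measurable_id.pow measurable_const)),
      aux_lintegral_Ioi_rpow (by linarith) hT]
  -- tail over Iio (-T)
  have htail' : ∫⁻ t in Iio (-T), g t = ∫⁻ t in Ioi T, g t := by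
    rw [aux_lintegral_reflect g (-T), neg_neg]
    refine setLIntegral_congr_fun measurableSet_Ioi (fun t ht => ?_)
    simp only [hg, abs_neg]
  rw [htail, htail', htail, Real.volume_Icc, show T - -T = 2 * T by ring] at step1
  refine le_trans step1 ?_
  have h2s : (0:ℝ) < 2 * s - 1 := by linarith
  rw [← ENNReal.ofReal_mul (by positivity), ← ENNReal.ofReal_mul (by positivity),
    ← ENNReal.ofReal_add (by positivity)
      (mul_nonneg (Real.rpow_nonneg (by positivity) _)
        (div_nonneg (Real.rpow_nonneg hT.le _) (by linarith))),
    ← ENNReal.ofReal_add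
      (add_nonneg (by positivity)
        (mul_nonneg (Real.rpow_nonneg (by positivity) _)
          (div_nonneg (Real.rpow_nonneg hT.le _) (by linarith))))
      (mul_nonneg (Real.rpow_nonneg (by positivity) _)
        (div_nonneg (Real.rpow_nonneg hT.le _) (by linarith)))]
  apply ENNReal.ofReal_le_ofReal
  -- key algebraic identity
  have key : (4 * b) ^ s * T ^ (-(2 * s) + 1) = 2 * (b * A) ^ ((1:ℝ)/2) * A ^ (-s) := by
    have h1 : ((4:ℝ) * b) ^ s = 4 ^ s * b ^ s := Real.mul_rpow (by norm_num) hb.le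
    have h2 : T ^ (-(2 * s) + 1)
        = 2 ^ (-(2 * s) + 1) * ((b * A) ^ ((1:ℝ)/2)) ^ (-(2 * s) + 1) :=
      Real.mul_rpow (by norm_num) (Real.rpow_nonneg (by positivity) _)
    have h3 : ((b * A) ^ ((1:ℝ)/2)) ^ (-(2 * s) + 1)
        = b ^ ((1:ℝ)/2 * (-(2 * s) + 1)) * A ^ ((1:ℝ)/2 * (-(2 * s) + 1)) := by
      rw [← Real.rpow_mul (by positivity), Real.mul_rpow hb.le hA.le]
    have h4 : (4:ℝ) ^ s = 2 ^ (2 * s) := by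
      rw [show (4:ℝ) = 2 ^ (2:ℝ) by
        rw [show (2:ℝ) = ((2:ℕ):ℝ) from by norm_num, Real.rpow_natCast]; norm_num,
        ← Real.rpow_mul (by norm_num)]
    have h5 : (2:ℝ) ^ (2 * s) * 2 ^ (-(2 * s) + 1) = 2 := by
      rw [← Real.rpow_add (by norm_num : (0:ℝ) < 2)]; norm_num
    have h6 : b ^ s * b ^ ((1:ℝ)/2 * (-(2 * s) + 1)) = b ^ ((1:ℝ)/2) := by
      rw [← Real.rpow_add hb]; ring_nf
    have h7 : A ^ ((1:ℝ)/2 * (-(2 * s) + 1)) = A ^ ((1:ℝ)/2) * A ^ (-s) := by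
      rw [← Real.rpow_add hA]; ring_nf
    calc (4 * b) ^ s * T ^ (-(2 * s) + 1)
        = (4 ^ s * b ^ s) * (2 ^ (-(2 * s) + 1) * (b ^ ((1:ℝ)/2 * (-(2 * s) + 1)) * A ^ ((1:ℝ)/2 * (-(2 * s) + 1)))) := by
          rw [h1, h2, h3]
      _ = (2 ^ (2*s) * 2 ^ (-(2 * s) + 1)) * ((b ^ s * b ^ ((1:ℝ)/2 * (-(2 * s) + 1))) * A ^ ((1:ℝ)/2 * (-(2 * s) + 1))) := by
          rw [h4]; ring
      _ = 2 * (b ^ ((1:ℝ)/2) * (A ^ ((1:ℝ)/2) * A ^ (-s))) := by rw [h5, h6, h7]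
      _ = 2 * ((b ^ ((1:ℝ)/2) * A ^ ((1:ℝ)/2)) * A ^ (-s)) := by ring
      _ = 2 * (b * A) ^ ((1:ℝ)/2) * A ^ (-s) := by
          rw [← Real.mul_rpow hb.le hA.le]; ring
  rw [show -(-(2 * s) + 1) = 2 * s - 1 by ring, ← mul_div_assoc, key, hTdef]
  apply le_of_eq
  field_simp
  ring

set_option maxHeartbeats 2000000 in
theorem sobolev_data_estimate
    (n : ℕ) (hn : 0 < n) (σ : ℝ) (hσ : ((n : ℝ) + 1) / 2 < σ) :
    ∃ C > (0 : ℝ), ∀ β ∈ Set.Ioo (1/2 : ℝ) 1, ∀ b ∈ Set.Ioo (0 : ℝ) 1,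
      ∫⁻ x in Metric.ball (0 : EuclideanSpace ℝ (Fin n)) b,
        ENNReal.ofReal ((b + β * x ⟨0, hn⟩) ^ (-σ))
      ≤ ENNReal.ofReal
          (C * b ^ ((n : ℝ) - σ) * (1 - β ^ 2) ^ (((n : ℝ) + 1 - 2 * σ) / 2)) := by
  have hn1 : (1:ℝ) ≤ (n:ℝ) := by exact_mod_cast hn
  have hnR : (0:ℝ) < (n:ℝ) := by linarith
  -- choose the exponents s, σ₁
  obtain ⟨s, hs_half, σ₁, hσ₁gt, hσ₁sum⟩ :
      ∃ s : ℝ, 1/2 < s ∧ ∃ σ₁ : ℝ, 1 < σ₁ ∧ σ₁ + ((n:ℝ) - 1) * s = σ := by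
    have hd : 0 < (σ - ((n:ℝ)+1)/2) / n := div_pos (by linarith) hnR
    refine ⟨1/2 + (σ - ((n:ℝ)+1)/2)/n, by linarith,
      σ - ((n:ℝ)-1) * (1/2 + (σ - ((n:ℝ)+1)/2)/n), ?_, by ring⟩
    have h1 : σ - ((n:ℝ)-1) * (1/2 + (σ - ((n:ℝ)+1)/2)/n)
        = 1 + (σ - ((n:ℝ)+1)/2)/n := by
      field_simp
      ring
    rw [h1]; linarith
  have hK₁pos : 0 < 2 + 2 / (σ₁ - 1) := by
    have : 0 < 2 / (σ₁ - 1) := div_pos two_pos (by linarith)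
    linarith
  have hK₂pos : 0 < 4 + 4 / (2 * s - 1) := by
    have : 0 < 4 / (2 * s - 1) := div_pos (by norm_num) (by linarith)
    linarith
  have hE : ((n:ℝ)+1)/2 - σ ≤ 0 := by linarith
  refine ⟨(2 + 2 / (σ₁ - 1)) * (4 + 4 / (2 * s - 1)) ^ (n - 1 : ℕ)
      * 2 ^ (-(((n:ℝ)+1)/2 - σ)),
    mul_pos (mul_pos hK₁pos (pow_pos hK₂pos _)) (Real.rpow_pos_of_pos two_pos _), ?_⟩
  intro β hβ b hb
  obtain ⟨hβ1, hβ2⟩ := hβ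
  obtain ⟨hb1, hb2⟩ := hb
  obtain ⟨A, hA_def⟩ : ∃ A : ℝ, A = b * (1 - β) := ⟨_, rfl⟩
  have hA : 0 < A := by rw [hA_def]; exact mul_pos hb1 (by linarith)
  obtain ⟨T, hT_def⟩ : ∃ T : ℝ, T = 2 * (b * A) ^ ((1:ℝ)/2) := ⟨_, rfl⟩
  have hT : 0 < T := by
    rw [hT_def]
    have := Real.rpow_pos_of_pos (mul_pos hb1 hA) ((1:ℝ)/2)
    linarith
  set i0 : Fin n := ⟨0, hn⟩ with hi0
  set φ0 : ℝ → ℝ≥0∞ := fun t => (Ioo (-b) b).indicator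
      (fun t => if b + t ≤ 2 * A then ENNReal.ofReal (A ^ (-σ₁))
        else ENNReal.ofReal (((b + t) / 2) ^ (-σ₁))) t with hφ0
  set φ1 : ℝ → ℝ≥0∞ := fun t =>
      if |t| ≤ T then ENNReal.ofReal (A ^ (-s))
      else ENNReal.ofReal ((4 * b) ^ s * |t| ^ (-(2 * s))) with hφ1
  set φ : Fin n → ℝ → ℝ≥0∞ := fun i => if i = i0 then φ0 else φ1 with hφ
  have hφ0m : Measurable φ0 := by
    refine Measurable.indicator ?_ measurableSet_Ioo
    refine Measurable.ite ?_ measurable_const ?_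
    · exact measurableSet_le (measurable_const.add measurable_id) measurable_const
    · exact ENNReal.measurable_ofReal.comp
        (((measurable_const.add measurable_id).div_const 2).pow measurable_const)
  have hφ1m : Measurable φ1 := by
    refine Measurable.ite ?_ measurable_const ?_
    · exact measurableSet_le continuous_abs.measurable measurable_const
    · exact ENNReal.measurable_ofReal.comp
        ((continuous_abs.measurable.pow measurable_const).const_mul _)
  have hφm : ∀ i, Measurable (φ i) := by
    intro i
    simp only [hφ]
    split <;> assumption
  -- pointwise bound
  have hpt : ∀ x : EuclideanSpace ℝ (Fin n), x ∈ Metric.ball (0 : EuclideanSpace ℝ (Fin n)) b →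
      ENNReal.ofReal ((b + β * x i0) ^ (-σ)) ≤ ∏ i, φ i (x i) := by
    intro x hx
    have hxb : ‖x‖ < b := mem_ball_zero_iff.mp hx
    have hS : ∑ j, x j ^ 2 = ‖x‖ ^ 2 := by
      rw [EuclideanSpace.norm_eq, Real.sq_sqrt (by positivity)]
      simp [Real.norm_eq_abs, sq_abs]
    have hnormsq : ∑ j, x j ^ 2 < b ^ 2 := by
      rw [hS]
      exact pow_lt_pow_left₀ hxb (norm_nonneg x) (by norm_num)
    have hx0sq : x i0 ^ 2 < b ^ 2 :=
      lt_of_le_of_lt (Finset.single_le_sum (fun j _ => sq_nonneg (x j)) (Finset.mem_univ i0))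
        hnormsq
    have hx0 : |x i0| < b := by
      nlinarith [sq_abs (x i0), abs_nonneg (x i0)]
    have hx0l : -b < x i0 := neg_lt_of_abs_lt hx0
    have hx0r : x i0 < b := lt_of_abs_lt hx0
    obtain ⟨u, hu_def⟩ : ∃ u : ℝ, u = b + β * x i0 := ⟨_, rfl⟩
    have hu_ge_A : A ≤ u := by
      rw [hu_def, hA_def]
      nlinarith [mul_pos (show (0:ℝ) < β by linarith) (show 0 < x i0 + b by linarith)]
    have hu_pos : 0 < u := lt_of_lt_of_le hA hu_ge_A
    have h2u : b + x i0 ≤ 2 * u := by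
      rw [hu_def]
      nlinarith [mul_pos (show (0:ℝ) < 2*β - 1 by linarith)
        (show 0 < x i0 + b by linarith)]
    have hxi : ∀ i, i ≠ i0 → x i ^ 2 ≤ 4 * b * u := by
      intro i hi
      have hpair : x i0 ^ 2 + x i ^ 2 ≤ ∑ j, x j ^ 2 := by
        have h := Finset.sum_pair (f := fun j => x j ^ 2)
          (show i0 ≠ i from fun h => hi h.symm)
        rw [← h]
        exact Finset.sum_le_sum_of_subset_of_nonneg (Finset.subset_univ _)
          fun j _ _ => sq_nonneg _
      nlinarith [sq_nonneg (b + x i0),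
        mul_le_mul_of_nonneg_left h2u (show (0:ℝ) ≤ 2*b by linarith)]
    -- bound for coordinate i0
    have h0 : ENNReal.ofReal (u ^ (-σ₁)) ≤ φ0 (x i0) := by
      have hmem : x i0 ∈ Ioo (-b) b := ⟨hx0l, hx0r⟩
      simp only [hφ0]
      rw [indicator_of_mem hmem]
      by_cases hcase : b + x i0 ≤ 2 * A
      · rw [if_pos hcase]
        exact ENNReal.ofReal_le_ofReal
          (Real.rpow_le_rpow_of_nonpos hA hu_ge_A (by linarith))
      · rw [if_neg hcase]
        exact ENNReal.ofReal_le_ofReal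
          (Real.rpow_le_rpow_of_nonpos (by nlinarith) (by linarith) (by linarith))
    -- bound for other coordinates
    have h1 : ∀ i, i ≠ i0 → ENNReal.ofReal (u ^ (-s)) ≤ φ1 (x i) := by
      intro i hi
      simp only [hφ1]
      by_cases hcase : |x i| ≤ T
      · rw [if_pos hcase]
        exact ENNReal.ofReal_le_ofReal
          (Real.rpow_le_rpow_of_nonpos hA hu_ge_A (by linarith))
      · rw [if_neg hcase]
        push_neg at hcase
        have habs : 0 < |x i| := lt_trans hT hcase
        have hxsq : 0 < x i ^ 2 := by nlinarith [sq_abs (x i)]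
        have hq : 0 < x i ^ 2 / (4 * b) := by positivity
        have hle_u : x i ^ 2 / (4 * b) ≤ u := by
          rw [div_le_iff₀ (by positivity)]
          nlinarith [hxi i hi]
        have main : u ^ (-s) ≤ (x i ^ 2 / (4 * b)) ^ (-s) :=
          Real.rpow_le_rpow_of_nonpos hq hle_u (by linarith)
        have hxabs : (x i ^ 2) ^ (-s) = |x i| ^ (-(2 * s)) := by
          rw [← sq_abs (x i), ← Real.rpow_natCast |x i| 2, ← Real.rpow_mul (abs_nonneg _)]
          norm_num
        have hrw : (x i ^ 2 / (4 * b)) ^ (-s) = (4 * b) ^ s * |x i| ^ (-(2 * s)) := by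
          rw [Real.div_rpow (sq_nonneg _) (by positivity : (0:ℝ) ≤ 4 * b),
            Real.rpow_neg (by positivity : (0:ℝ) ≤ 4 * b), div_inv_eq_mul, hxabs, mul_comm]
        rw [← hrw]
        exact ENNReal.ofReal_le_ofReal main
    -- assemble
    calc ENNReal.ofReal ((b + β * x i0) ^ (-σ))
        = ENNReal.ofReal (u ^ (-σ₁)) * ∏ _i ∈ Finset.univ.erase i0,
            ENNReal.ofReal (u ^ (-s)) := by
          rw [Finset.prod_const, ← ENNReal.ofReal_pow (Real.rpow_nonneg hu_pos.le _),
            ← ENNReal.ofReal_mul (Real.rpow_nonneg hu_pos.le _), ← hu_def]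
          congr 1
          rw [← Real.rpow_natCast (u ^ (-s)) _, ← Real.rpow_mul hu_pos.le,
            ← Real.rpow_add hu_pos]
          congr 1
          have hcard : (((Finset.univ.erase i0).card : ℕ) : ℝ) = (n:ℝ) - 1 := by
            rw [Finset.card_erase_of_mem (Finset.mem_univ i0), Finset.card_univ,
              Fintype.card_fin, Nat.cast_sub hn]
            norm_num
          rw [hcard]
          nlinarith [hσ₁sum]
      _ ≤ φ i0 (x i0) * ∏ i ∈ Finset.univ.erase i0, φ i (x i) := by
          refine mul_le_mul' ?_ (Finset.prod_le_prod' fun i hi => ?_)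
          · simpa [hφ] using h0
          · have hne : i ≠ i0 := Finset.ne_of_mem_erase hi
            simpa [hφ, hne] using h1 i hne
      _ = ∏ i, φ i (x i) :=
          Finset.mul_prod_erase Finset.univ (fun i => φ i (x i)) (Finset.mem_univ i0)
  -- main chain
  calc ∫⁻ x in Metric.ball (0 : EuclideanSpace ℝ (Fin n)) b,
        ENNReal.ofReal ((b + β * x ⟨0, hn⟩) ^ (-σ))
      = ∫⁻ x : EuclideanSpace ℝ (Fin n), (Metric.ball (0 : EuclideanSpace ℝ (Fin n)) b).indicator
          (fun x => ENNReal.ofReal ((b + β * x i0) ^ (-σ))) x :=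
        (lintegral_indicator measurableSet_ball _).symm
    _ ≤ ∫⁻ x : EuclideanSpace ℝ (Fin n), ∏ i, φ i (x i) := by
        refine lintegral_mono fun x => ?_
        by_cases hx : x ∈ Metric.ball (0 : EuclideanSpace ℝ (Fin n)) b
        · rw [indicator_of_mem hx]
          exact hpt x hx
        · rw [indicator_of_notMem hx]
          exact zero_le
    _ = ∫⁻ y : Fin n → ℝ, ∏ i, φ i (y i) :=
        (EuclideanSpace.volume_preserving_symm_measurableEquiv_toLp (Fin n)).lintegral_comp_emb
          (MeasurableEquiv.toLp 2 (Fin n → ℝ)).symm.measurableEmbedding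
          (fun y => ∏ i, φ i (y i))
    _ = ∏ i, ∫⁻ t, φ i t := aux_lintegral_pi_prod φ hφm
    _ = (∫⁻ t, φ0 t) * (∫⁻ t, φ1 t) ^ (n - 1 : ℕ) := by
        rw [← Finset.mul_prod_erase Finset.univ (fun i => ∫⁻ t, φ i t)
          (Finset.mem_univ i0)]
        have h1 : (∫⁻ t, φ i0 t) = ∫⁻ t, φ0 t := by simp [hφ]
        have h2 : ∀ i ∈ Finset.univ.erase i0, (∫⁻ t, φ i t) = ∫⁻ t, φ1 t := fun i hi => by
          simp [hφ, Finset.ne_of_mem_erase hi]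
        rw [h1, Finset.prod_congr rfl h2, Finset.prod_const,
          Finset.card_erase_of_mem (Finset.mem_univ i0), Finset.card_univ,
          Fintype.card_fin]
    _ ≤ ENNReal.ofReal ((2 + 2 / (σ₁ - 1)) * A ^ (1 - σ₁))
        * ENNReal.ofReal ((4 + 4 / (2 * s - 1)) * (b * A) ^ ((1:ℝ)/2) * A ^ (-s))
          ^ (n - 1 : ℕ) := by
        refine mul_le_mul' ?_ (pow_le_pow_left' ?_ _)
        · rw [hφ0]; exact aux_I0 hb1 hA hσ₁gt
        · rw [hφ1, hT_def]; exact aux_I1 hb1 hA hs_half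
    _ ≤ ENNReal.ofReal ((2 + 2 / (σ₁ - 1)) * (4 + 4 / (2 * s - 1)) ^ (n - 1 : ℕ)
        * 2 ^ (-(((n:ℝ)+1)/2 - σ)) * b ^ ((n : ℝ) - σ)
        * (1 - β ^ 2) ^ (((n : ℝ) + 1 - 2 * σ) / 2)) := by
        rw [← ENNReal.ofReal_pow (by positivity), ← ENNReal.ofReal_mul (by positivity)]
        apply ENNReal.ofReal_le_ofReal
        -- real algebra
        have hb1' : (0:ℝ) < 1 - β := by linarith
        have hb2' : (0:ℝ) < 1 + β := by linarith
        have hbb : (0:ℝ) < 1 - β ^ 2 := by nlinarith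
        have hcast : ((n - 1 : ℕ) : ℝ) = (n:ℝ) - 1 := by
          rw [Nat.cast_sub hn]; norm_num
        have c1 : ((b * A) ^ ((1:ℝ)/2)) ^ (n - 1 : ℕ)
            = b ^ (((n:ℝ)-1)/2) * A ^ (((n:ℝ)-1)/2) := by
          rw [← Real.rpow_natCast ((b * A) ^ ((1:ℝ)/2)) (n-1), ← Real.rpow_mul (by positivity),
            hcast, Real.mul_rpow hb1.le hA.le, show (1:ℝ)/2 * ((n:ℝ)-1) = ((n:ℝ)-1)/2 by ring]
        have c2 : (A ^ (-s)) ^ (n - 1 : ℕ) = A ^ (-s * ((n:ℝ)-1)) := by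
          rw [← Real.rpow_natCast (A ^ (-s)) (n-1), ← Real.rpow_mul hA.le, hcast]
        have c3 : A ^ (1-σ₁) * A ^ (-s * ((n:ℝ)-1)) * A ^ (((n:ℝ)-1)/2)
            = A ^ (((n:ℝ)+1)/2 - σ) := by
          rw [← Real.rpow_add hA, ← Real.rpow_add hA]
          congr 1
          nlinarith [hσ₁sum]
        have c4 : A ^ (((n:ℝ)+1)/2 - σ)
            = b ^ (((n:ℝ)+1)/2 - σ) * (1-β) ^ (((n:ℝ)+1)/2 - σ) := by
          rw [hA_def, Real.mul_rpow hb1.le hb1'.le]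
        have c5 : b ^ (((n:ℝ)-1)/2) * b ^ (((n:ℝ)+1)/2 - σ) = b ^ ((n:ℝ) - σ) := by
          rw [← Real.rpow_add hb1]
          congr 1; ring
        have c6 : (1-β) ^ (((n:ℝ)+1)/2 - σ)
            ≤ 2 ^ (-(((n:ℝ)+1)/2 - σ)) * (1 - β^2) ^ (((n:ℝ)+1)/2 - σ) := by
          have hfac : (1 - β^2) = (1-β) * (1+β) := by ring
          have h2e : (2:ℝ) ^ (((n:ℝ)+1)/2 - σ) ≤ (1+β) ^ (((n:ℝ)+1)/2 - σ) :=
            Real.rpow_le_rpow_of_nonpos hb2' (by linarith) hE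
          have h2 : (2:ℝ) ^ (((n:ℝ)+1)/2 - σ) * (2:ℝ) ^ (-(((n:ℝ)+1)/2 - σ)) = 1 := by
            rw [← Real.rpow_add two_pos]; simp
          calc (1-β) ^ (((n:ℝ)+1)/2 - σ)
              = ((2:ℝ) ^ (((n:ℝ)+1)/2 - σ) * 2 ^ (-(((n:ℝ)+1)/2 - σ)))
                * (1-β) ^ (((n:ℝ)+1)/2 - σ) := by rw [h2, one_mul]
            _ ≤ ((1+β) ^ (((n:ℝ)+1)/2 - σ) * 2 ^ (-(((n:ℝ)+1)/2 - σ)))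
                * (1-β) ^ (((n:ℝ)+1)/2 - σ) := by
                refine mul_le_mul_of_nonneg_right
                  (mul_le_mul_of_nonneg_right h2e (Real.rpow_nonneg (by norm_num) _))
                  (Real.rpow_nonneg hb1'.le _)
            _ = 2 ^ (-(((n:ℝ)+1)/2 - σ)) * ((1-β) ^ (((n:ℝ)+1)/2 - σ)
                * (1+β) ^ (((n:ℝ)+1)/2 - σ)) := by ring
            _ = 2 ^ (-(((n:ℝ)+1)/2 - σ)) * (1 - β^2) ^ (((n:ℝ)+1)/2 - σ) := by
                rw [hfac, Real.mul_rpow hb1'.le hb2'.le]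
        have hKK : (0:ℝ) ≤ (2 + 2 / (σ₁ - 1)) * (4 + 4 / (2 * s - 1)) ^ (n - 1 : ℕ) :=
          le_of_lt (mul_pos hK₁pos (pow_pos hK₂pos _))
        calc (2 + 2 / (σ₁ - 1)) * A ^ (1 - σ₁)
              * ((4 + 4 / (2 * s - 1)) * (b * A) ^ ((1:ℝ)/2) * A ^ (-s)) ^ (n - 1 : ℕ)
            = ((2 + 2 / (σ₁ - 1)) * (4 + 4 / (2 * s - 1)) ^ (n - 1 : ℕ))
              * (b ^ (((n:ℝ)-1)/2)
                * (A ^ (1-σ₁) * A ^ (-s * ((n:ℝ)-1)) * A ^ (((n:ℝ)-1)/2))) := by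
              rw [mul_pow, mul_pow, c1, c2]; ring
          _ = ((2 + 2 / (σ₁ - 1)) * (4 + 4 / (2 * s - 1)) ^ (n - 1 : ℕ))
              * ((b ^ (((n:ℝ)-1)/2) * b ^ (((n:ℝ)+1)/2 - σ)) * (1-β) ^ (((n:ℝ)+1)/2 - σ)) := by
              rw [c3, c4]; ring
          _ = ((2 + 2 / (σ₁ - 1)) * (4 + 4 / (2 * s - 1)) ^ (n - 1 : ℕ))
              * (b ^ ((n:ℝ) - σ) * (1-β) ^ (((n:ℝ)+1)/2 - σ)) := by rw [c5]
          _ ≤ ((2 + 2 / (σ₁ - 1)) * (4 + 4 / (2 * s - 1)) ^ (n - 1 : ℕ))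
              * (b ^ ((n:ℝ) - σ) * (2 ^ (-(((n:ℝ)+1)/2 - σ))
                * (1 - β^2) ^ (((n:ℝ)+1)/2 - σ))) := by
              refine mul_le_mul_of_nonneg_left
                (mul_le_mul_of_nonneg_left c6 (Real.rpow_nonneg hb1.le _)) hKK
          _ = (2 + 2 / (σ₁ - 1)) * (4 + 4 / (2 * s - 1)) ^ (n - 1 : ℕ)
              * 2 ^ (-(((n:ℝ)+1)/2 - σ)) * b ^ ((n : ℝ) - σ)
              * (1 - β ^ 2) ^ (((n : ℝ) + 1 - 2 * σ) / 2) := by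
              rw [show ((n:ℝ) + 1 - 2 * σ) / 2 = ((n:ℝ)+1)/2 - σ by ring]; ring
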